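/- Let r_det > 0 and let f ∈ C^∞(ℝ³) be compactly supported. Define p(x, t) = ∂_t( (1/(4πt)) · ∫_{∂B(x,t)} f(y) dS(y) ) for x ∈ ℝ³ and t > 0, where the integral is over the sphere of center x and radius t with respect to two-dimensional Hausdorff (surface) measure (this is Kirchhoff's formula for the solution of the wave equation with initial data p(·,0) = f, ∂_t p(·,0) = 0). Then for every θ ∈ S² and t > 0, (1/(2π)) · ∫_{α ∈ S², θ·α = 0} p(r_det·α, t) dS(α) = (1/(8π²)) · ∂_t( t · R_P f(θ, t) ), where the left-hand integral is over the great circle orthogonal to θ with respect to one-dimensional Hausdorff (arc-length) measure. -/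

import Mathlib

open MeasureTheory Filter Real
open scoped Topology RealInnerProductSpace

noncomputable section
open scoped ENNReal NNReal

abbrev E3 := EuclideanSpace ℝ (Fin 3)
abbrev E2 := EuclideanSpace ℝ (Fin 2)

def vec3 (a b c : ℝ) : E3 := (WithLp.equiv 2 (Fin 3 → ℝ)).symm ![a, b, c]
def vec2 (a b : ℝ) : E2 := (WithLp.equiv 2 (Fin 2 → ℝ)).symm ![a, b]

/-- The great circle of the unit sphere in `ℝ³` orthogonal to `θ`. -/
def circleSet (θ : E3) : Set E3 := {α | α ∈ Metric.sphere (0:E3) 1 ∧ ⟪θ, α⟫ = 0}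

/-- The Minkowski–Funk transform: integral over the great circle orthogonal to `θ`
with respect to one-dimensional Hausdorff (arc-length) measure. -/
def funkT (φ : E3 → ℝ) (θ : E3) : ℝ := ∫ α in circleSet θ, φ α ∂μH[1]

/-- The spherical Radon transform with centers on the sphere of radius `r`. -/
def sphRadon (r : ℝ) (f : E3 → ℝ) (α : E3) (t : ℝ) : ℝ :=
  ∫ β in Metric.sphere (0:E3) 1, f (r • α + t • β) ∂μH[2]

/-- The transform `R_P` arising in PAT with circular integrating detectors. -/
def RP (r : ℝ) (f : E3 → ℝ) (θ : E3) (t : ℝ) : ℝ :=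
  ∫ α in circleSet θ, (∫ β in Metric.sphere (0:E3) 1, f (r • α + t • β) ∂μH[2]) ∂μH[1]

/-- Rotation of a vector in `ℝ²` by `π/2`. -/
def perp (ω : E2) : E2 := vec2 (-(ω 1)) (ω 0)

/-- The two-dimensional Radon transform. -/
def radon2 (Φ : E2 → ℝ) (ω : E2) (s : ℝ) : ℝ := ∫ ν : ℝ, Φ (s • ω + ν • perp ω)

/-- Principal value of `∫ F`, where the singular set is removed via `{s | ε < |e s|}`:
the limit as `ε → 0⁺` of the integrals over `{s | |e s| > ε}`. -/
def pv (F : ℝ → ℝ) (e : ℝ → ℝ) : ℝ :=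
  limUnder (𝓝[>] (0:ℝ)) (fun ε => ∫ s in {s | ε < |e s|}, F s)

/-- The Hilbert transform `Hu(s) = (1/π) p.v. ∫ u(s')/(s-s') ds'`. -/
def hilbertT (u : ℝ → ℝ) (s : ℝ) : ℝ :=
  (1/π) * pv (fun s' => u s' / (s - s')) (fun s' => s - s')

/-- The backprojection operator `R#u(x) = ∫_{S¹} u(ω, x·ω) dS(ω)`. -/
def backproj (u : E2 → ℝ → ℝ) (x : E2) : ℝ :=
  ∫ ω in Metric.sphere (0:E2) 1, u ω ⟪x, ω⟫ ∂μH[1]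

open scoped ENNReal NNReal in
lemma exists_cos_sin {a b : ℝ} (h : a^2 + b^2 = 1) :
    ∃ s ∈ Set.Icc (-π) π, cos s = a ∧ sin s = b := by
  have hz : (⟨a, b⟩ : ℂ) ≠ 0 := by
    intro hc
    rw [Complex.ext_iff] at hc
    simp at hc
    rw [hc.1, hc.2] at h; norm_num at h
  have habs : ‖(⟨a, b⟩ : ℂ)‖ = 1 := by
    rw [Complex.norm_def, Complex.normSq_mk]
    rw [show a*a+b*b = a^2+b^2 by ring, h, Real.sqrt_one]
  refine ⟨Complex.arg ⟨a, b⟩, ⟨(Complex.neg_pi_lt_arg _).le, Complex.arg_le_pi _⟩, ?_, ?_⟩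
  · rw [Complex.cos_arg hz, habs]; simp
  · rw [Complex.sin_arg, habs]; simp

def vec3' (a b c : ℝ) : E3 := (WithLp.equiv 2 (Fin 3 → ℝ)).symm ![a, b, c]

def sphParam (p : Fin 2 → ℝ) : E3 :=
  vec3' (cos (p 0) * sin (p 1)) (sin (p 0) * sin (p 1)) (cos (p 1))

lemma vec3'_apply (a b c : ℝ) : (vec3' a b c) 0 = a ∧ (vec3' a b c) 1 = b ∧ (vec3' a b c) 2 = c := by
  refine ⟨rfl, rfl, rfl⟩

lemma sphParam_lipschitz : LipschitzWith 4 sphParam := by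
  apply LipschitzWith.of_dist_le_mul
  intro p q
  suffices h : dist (sphParam p) (sphParam q) ≤ 4 * dist p q by simpa using h
  have key : ∀ i : Fin 3, dist (sphParam p i) (sphParam q i) ≤ 2 * dist p q := by
    intro i
    have h0 : dist (p 0) (q 0) ≤ dist p q := dist_le_pi_dist p q 0
    have h1 : dist (p 1) (q 1) ≤ dist p q := dist_le_pi_dist p q 1
    rw [Real.dist_eq] at h0 h1 ⊢
    have lipc : LipschitzWith 1 cos := by
      apply lipschitzWith_of_nnnorm_deriv_le Real.differentiable_cos
      intro x
      rw [Real.deriv_cos]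
      simpa using NNReal.coe_le_coe.mp (by simpa [Real.norm_eq_abs] using Real.abs_sin_le_one x)
    have lips : LipschitzWith 1 sin := by
      apply lipschitzWith_of_nnnorm_deriv_le Real.differentiable_sin
      intro x
      rw [Real.deriv_sin]
      simpa using NNReal.coe_le_coe.mp (by simpa [Real.norm_eq_abs] using Real.abs_cos_le_one x)
    have hc : |cos (p 0) - cos (q 0)| ≤ |p 0 - q 0| := by
      simpa [Real.dist_eq] using (lipc.dist_le_mul (p 0) (q 0))
    have hs : |sin (p 0) - sin (q 0)| ≤ |p 0 - q 0| := by
      simpa [Real.dist_eq] using (lips.dist_le_mul (p 0) (q 0))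
    have hc1 : |cos (p 1) - cos (q 1)| ≤ |p 1 - q 1| := by
      simpa [Real.dist_eq] using (lipc.dist_le_mul (p 1) (q 1))
    have hs1 : |sin (p 1) - sin (q 1)| ≤ |p 1 - q 1| := by
      simpa [Real.dist_eq] using (lips.dist_le_mul (p 1) (q 1))
    fin_cases i
    · show |cos (p 0) * sin (p 1) - cos (q 0) * sin (q 1)| ≤ 2 * dist p q
      have : cos (p 0) * sin (p 1) - cos (q 0) * sin (q 1)
          = (cos (p 0) - cos (q 0)) * sin (p 1) + cos (q 0) * (sin (p 1) - sin (q 1)) := by ring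
      rw [this]
      calc |(cos (p 0) - cos (q 0)) * sin (p 1) + cos (q 0) * (sin (p 1) - sin (q 1))|
          ≤ |(cos (p 0) - cos (q 0)) * sin (p 1)| + |cos (q 0) * (sin (p 1) - sin (q 1))| :=
            abs_add_le _ _
        _ ≤ |cos (p 0) - cos (q 0)| * 1 + 1 * |sin (p 1) - sin (q 1)| := by
            rw [abs_mul, abs_mul]
            gcongr <;> simp [Real.abs_cos_le_one, Real.abs_sin_le_one, abs_nonneg]
        _ ≤ |p 0 - q 0| + |p 1 - q 1| := by rw [mul_one, one_mul]; gcongr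
        _ ≤ dist p q + dist p q := by gcongr
        _ = 2 * dist p q := by ring
    · show |sin (p 0) * sin (p 1) - sin (q 0) * sin (q 1)| ≤ 2 * dist p q
      have : sin (p 0) * sin (p 1) - sin (q 0) * sin (q 1)
          = (sin (p 0) - sin (q 0)) * sin (p 1) + sin (q 0) * (sin (p 1) - sin (q 1)) := by ring
      rw [this]
      calc |(sin (p 0) - sin (q 0)) * sin (p 1) + sin (q 0) * (sin (p 1) - sin (q 1))|
          ≤ |(sin (p 0) - sin (q 0)) * sin (p 1)| + |sin (q 0) * (sin (p 1) - sin (q 1))| :=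
            abs_add_le _ _
        _ ≤ |sin (p 0) - sin (q 0)| * 1 + 1 * |sin (p 1) - sin (q 1)| := by
            rw [abs_mul, abs_mul]
            gcongr <;> simp [Real.abs_sin_le_one, abs_nonneg]
        _ ≤ |p 0 - q 0| + |p 1 - q 1| := by rw [mul_one, one_mul]; gcongr
        _ ≤ dist p q + dist p q := by gcongr
        _ = 2 * dist p q := by ring
    · show |cos (p 1) - cos (q 1)| ≤ 2 * dist p q
      calc |cos (p 1) - cos (q 1)| ≤ |p 1 - q 1| := hc1
        _ ≤ dist p q := h1
        _ ≤ 2 * dist p q := by nlinarith [dist_nonneg (x := p) (y := q)]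
  have hd : dist (sphParam p) (sphParam q) = Real.sqrt (∑ i : Fin 3, dist (sphParam p i) (sphParam q i) ^ 2) :=
    EuclideanSpace.dist_eq _ _
  rw [hd]
  have : (∑ i : Fin 3, dist (sphParam p i) (sphParam q i) ^ 2) ≤ 3 * (2 * dist p q)^2 := by
    rw [Fin.sum_univ_three]
    have k0 := key 0; have k1 := key 1; have k2 := key 2
    have n0 : (0:ℝ) ≤ dist (sphParam p 0) (sphParam q 0) := dist_nonneg
    have n1 : (0:ℝ) ≤ dist (sphParam p 1) (sphParam q 1) := dist_nonneg
    have n2 : (0:ℝ) ≤ dist (sphParam p 2) (sphParam q 2) := dist_nonneg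
    nlinarith
  calc Real.sqrt (∑ i : Fin 3, dist (sphParam p i) (sphParam q i) ^ 2)
      ≤ Real.sqrt (3 * (2 * dist p q)^2) := Real.sqrt_le_sqrt this
    _ ≤ Real.sqrt (4 * (2 * dist p q)^2) := by
        apply Real.sqrt_le_sqrt; nlinarith [sq_nonneg (2 * dist p q)]
    _ = 2 * (2 * dist p q) := by
        rw [show (4:ℝ) * (2 * dist p q)^2 = (2 * (2 * dist p q))^2 by ring]
        exact Real.sqrt_sq (by positivity)
    _ = 4 * dist p q := by ring

lemma norm_E3_sq (x : E3) : ‖x‖^2 = (x 0)^2 + (x 1)^2 + (x 2)^2 := by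
  rw [EuclideanSpace.norm_eq]
  rw [Real.sq_sqrt (by positivity)]
  simp [Fin.sum_univ_three, Real.norm_eq_abs, sq_abs]

lemma sphere_subset_param :
    Metric.sphere (0:E3) 1 ⊆ sphParam '' (Set.univ.pi fun _ : Fin 2 => Set.Icc (-π) π) := by
  intro α hα
  have hn : ‖α‖ = 1 := by simpa using hα
  have hsq : (α 0)^2 + (α 1)^2 + (α 2)^2 = 1 := by rw [← norm_E3_sq, hn]; norm_num
  have h2 : |α 2| ≤ 1 := by nlinarith [sq_nonneg (α 0), sq_nonneg (α 1), abs_nonneg (α 2), sq_abs (α 2)]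
  set b := Real.arccos (α 2) with hb
  have hcb : cos b = α 2 := Real.cos_arccos (by linarith [abs_le.mp h2]) (by linarith [abs_le.mp h2])
  have hsb : sin b = Real.sqrt (1 - (α 2)^2) := by rw [hb, Real.sin_arccos]
  have hbmem : b ∈ Set.Icc (-π) π := by
    constructor
    · linarith [Real.arccos_nonneg (α 2), Real.pi_pos]
    · exact Real.arccos_le_pi (α 2)
  have hsb_sq : sin b ^ 2 = (α 0)^2 + (α 1)^2 := by
    rw [hsb, Real.sq_sqrt (by nlinarith [sq_abs (α 2), abs_nonneg (α 2)])]
    linarith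
  have hsb_nonneg : 0 ≤ sin b := by rw [hsb]; positivity
  by_cases hz : (α 0)^2 + (α 1)^2 = 0
  · have h0 : α 0 = 0 := by nlinarith [sq_nonneg (α 0), sq_nonneg (α 1)]
    have h1 : α 1 = 0 := by nlinarith [sq_nonneg (α 0), sq_nonneg (α 1)]
    refine ⟨![0, b], ?_, ?_⟩
    · intro i _; fin_cases i
      · simpa using (⟨by linarith [Real.pi_pos], by linarith [Real.pi_pos]⟩ :
          (0:ℝ) ∈ Set.Icc (-π) π)
      · simpa using hbmem
    · have hsb0 : sin b = 0 := by nlinarith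
      refine PiLp.ext fun i => ?_
      fin_cases i
      · show cos (![0, b] 0) * sin (![0, b] 1) = α 0
        simp [hsb0, h0]
      · show sin (![0, b] 0) * sin (![0, b] 1) = α 1
        simp [h1]
      · show cos (![0, b] 1) = α 2
        simpa using hcb
  · have hρ : 0 < sin b := by
      rcases lt_or_eq_of_le hsb_nonneg with h | h
      · exact h
      · exfalso; apply hz; nlinarith
    obtain ⟨a, hamem, hca, hsa⟩ : ∃ a ∈ Set.Icc (-π) π, cos a = α 0 / sin b ∧ sin a = α 1 / sin b := by
      apply exists_cos_sin
      field_simp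
      linarith [hsb_sq]
    refine ⟨![a, b], ?_, ?_⟩
    · intro i _; fin_cases i
      · simpa using hamem
      · simpa using hbmem
    · refine PiLp.ext fun i => ?_
      fin_cases i
      · show cos (![a, b] 0) * sin (![a, b] 1) = α 0
        simp only [Matrix.cons_val_zero, Matrix.cons_val_one, Matrix.head_cons]
        rw [hca]; field_simp
      · show sin (![a, b] 0) * sin (![a, b] 1) = α 1
        simp only [Matrix.cons_val_zero, Matrix.cons_val_one, Matrix.head_cons]
        rw [hsa]; field_simp
      · show cos (![a, b] 1) = α 2
        simpa using hcb

lemma sphere_hausdorff_finite : μH[2] (Metric.sphere (0:E3) 1) < ⊤ := by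
  have h1 : μH[2] (Metric.sphere (0:E3) 1)
      ≤ μH[2] (sphParam '' (Set.univ.pi fun _ : Fin 2 => Set.Icc (-π) π)) :=
    measure_mono sphere_subset_param
  have h2 : μH[2] (sphParam '' (Set.univ.pi fun _ : Fin 2 => Set.Icc (-π) π))
      ≤ (4:ℝ≥0∞) ^ (2:ℝ) * μH[2] (Set.univ.pi fun _ : Fin 2 => Set.Icc (-π) π) := by
    simpa using sphParam_lipschitz.hausdorffMeasure_image_le (by norm_num : (0:ℝ) ≤ 2) _
  have h3 : (μH[2] : Measure (Fin 2 → ℝ)) = volume := by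
    have := hausdorffMeasure_pi_real (ι := Fin 2)
    simpa using this
  have h4 : volume (Set.univ.pi fun _ : Fin 2 => Set.Icc (-π) π) < ⊤ := by
    rw [volume_pi_pi]
    simp only [Real.volume_Icc, Finset.prod_const]
    exact ENNReal.pow_lt_top ENNReal.ofReal_lt_top
  calc μH[2] (Metric.sphere (0:E3) 1) ≤ _ := h1
    _ ≤ _ := h2
    _ < ⊤ := by
        rw [h3]
        exact ENNReal.mul_lt_top (ENNReal.rpow_lt_top_of_nonneg (by norm_num) (by norm_num)) h4

instance : Fact (Module.finrank ℝ E3 = 2 + 1) := ⟨by simp [finrank_euclideanSpace_fin]⟩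

set_option maxHeartbeats 1000000 in
lemma circle_hausdorff_finite {θ : E3} (hθ : ‖θ‖ = 1) : μH[1] (circleSet θ) < ⊤ := by
  have hθ0 : θ ≠ 0 := by intro h; rw [h] at hθ; simp at hθ
  set K := (ℝ ∙ θ)ᗮ
  set b : OrthonormalBasis (Fin 2) ℝ K := OrthonormalBasis.fromOrthogonalSpanSingleton 2 hθ0
  set u : E3 := (b 0 : E3)
  set v : E3 := (b 1 : E3)
  have hu : ‖u‖ = 1 := b.orthonormal.1 0
  have hv : ‖v‖ = 1 := b.orthonormal.1 1
  have huv : ⟪u, v⟫ = 0 := by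
    have := b.orthonormal.2 (i := 0) (j := 1) (by norm_num)
    exact this
  set γ : ℝ → E3 := fun s => cos s • u + sin s • v with hγ
  have hnorm : ∀ c d : ℝ, ‖c • u + d • v‖^2 = c^2 + d^2 := by
    intro c d
    rw [norm_add_sq_real]
    rw [inner_smul_left, inner_smul_right]
    simp only [norm_smul, huv, RCLike.star_def, conj_trivial, mul_zero]
    rw [Real.norm_eq_abs, Real.norm_eq_abs, hu, hv]
    rw [mul_pow, mul_pow, sq_abs, sq_abs]
    ring
  have hlip : LipschitzWith 2 γ := by
    apply LipschitzWith.of_dist_le_mul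
    intro s s'
    suffices h : dist (γ s) (γ s') ≤ 2 * dist s s' by simpa using h
    have hdiff : γ s - γ s' = (cos s - cos s') • u + (sin s - sin s') • v := by
      rw [hγ]; simp only [smul_sub, sub_smul]; abel
    rw [dist_eq_norm, hdiff]
    have h1 : ‖(cos s - cos s') • u + (sin s - sin s') • v‖^2
        = (cos s - cos s')^2 + (sin s - sin s')^2 := hnorm _ _
    have lipc : LipschitzWith 1 cos := by
      apply lipschitzWith_of_nnnorm_deriv_le Real.differentiable_cos
      intro x; rw [Real.deriv_cos]
      simpa using NNReal.coe_le_coe.mp (by simpa [Real.norm_eq_abs] using Real.abs_sin_le_one x)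
    have lips : LipschitzWith 1 sin := by
      apply lipschitzWith_of_nnnorm_deriv_le Real.differentiable_sin
      intro x; rw [Real.deriv_sin]
      simpa using NNReal.coe_le_coe.mp (by simpa [Real.norm_eq_abs] using Real.abs_cos_le_one x)
    have hc : |cos s - cos s'| ≤ |s - s'| := by
      simpa [Real.dist_eq] using lipc.dist_le_mul s s'
    have hs : |sin s - sin s'| ≤ |s - s'| := by
      simpa [Real.dist_eq] using lips.dist_le_mul s s'
    have hnn : (0:ℝ) ≤ ‖(cos s - cos s') • u + (sin s - sin s') • v‖ := norm_nonneg _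
    rw [Real.dist_eq]
    have h2 : ‖(cos s - cos s') • u + (sin s - sin s') • v‖^2 ≤ (2*|s - s'|)^2 := by
      nlinarith [sq_abs (cos s - cos s'), sq_abs (sin s - sin s'), abs_nonneg (s - s'),
        mul_self_le_mul_self (abs_nonneg (cos s - cos s')) hc,
        mul_self_le_mul_self (abs_nonneg (sin s - sin s')) hs, sq_abs (s - s'),
        sq_nonneg (s - s')]
    have h3 := Real.sqrt_le_sqrt h2
    rwa [Real.sqrt_sq hnn, Real.sqrt_sq (by positivity)] at h3
  have hsubset : circleSet θ ⊆ γ '' Set.Icc (-π) π := by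
    rintro α ⟨hα1, hα2⟩
    have hmem : α ∈ K := by
      rw [Submodule.mem_orthogonal_singleton_iff_inner_right]
      exact hα2
    set w : K := ⟨α, hmem⟩
    have hw : ∑ i, b.repr w i • b i = w := b.sum_repr w
    set c0 : ℝ := b.repr w 0
    set c1 : ℝ := b.repr w 1
    have hwn : ‖w‖ = 1 := by
      have : ‖(w : E3)‖ = 1 := by simpa using hα1
      exact this
    have hrn : c0^2 + c1^2 = 1 := by
      have h1 : ‖b.repr w‖ = 1 := by rw [b.repr.norm_map w]; exact hwn
      have h2 : ‖b.repr w‖^2 = c0^2 + c1^2 := by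
        rw [EuclideanSpace.norm_eq, Real.sq_sqrt (by positivity)]
        simp [Fin.sum_univ_two, Real.norm_eq_abs, sq_abs, c0, c1]
      rw [h1] at h2; linarith [h2]
    obtain ⟨s, hsmem, hcs, hss⟩ := exists_cos_sin hrn
    refine ⟨s, hsmem, ?_⟩
    have : γ s = ((c0 • b 0 + c1 • b 1 : K) : E3) := by
      rw [hγ]
      push_cast
      rw [hcs, hss]
    rw [this]
    have : (c0 • b 0 + c1 • b 1 : K) = w := by
      have := hw
      rwa [Fin.sum_univ_two] at this
    rw [this]
  calc μH[1] (circleSet θ) ≤ μH[1] (γ '' Set.Icc (-π) π) := measure_mono hsubset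
    _ ≤ (2:ℝ≥0∞) * volume (Set.Icc (-π) π) := by
        simpa [MeasureTheory.hausdorffMeasure_real] using
          hlip.hausdorffMeasure_image_le (by norm_num : (0:ℝ) ≤ 1) (Set.Icc (-π) π)
    _ < ⊤ := by
        rw [Real.volume_Icc]
        exact ENNReal.mul_lt_top (by simp) ENNReal.ofReal_lt_top

open scoped Pointwise in
lemma hausdorff_image_affine {x : E3} {t : ℝ} (ht : 0 < t) (A : Set E3) :
    μH[2] ((fun β => x + t • β) '' A) = ENNReal.ofReal (t^2) * μH[2] A := by
  have hcomp : (fun β : E3 => x + t • β) = (fun y => x + y) ∘ (fun β => t • β) := rfl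
  rw [hcomp, Set.image_comp]
  have h1 : (fun β : E3 => t • β) '' A = t • A := rfl
  have h2 : (fun y : E3 => x + y) '' (t • A) = x +ᵥ (t • A) := rfl
  rw [h1, h2]
  rw [hausdorffMeasure_vadd x (Or.inl (by norm_num : (0:ℝ) ≤ 2)) _]
  rw [Measure.hausdorffMeasure_smul₀ (by norm_num : (0:ℝ) ≤ 2) ht.ne' A]
  rw [ENNReal.smul_def, smul_eq_mul]
  congr 1
  rw [show ((2:ℝ)) = ((2:ℕ):ℝ) by norm_num, NNReal.rpow_natCast]
  push_cast
  rw [show ((‖t‖₊ : ℝ≥0∞)) = ENNReal.ofReal t from (Real.enorm_eq_ofReal ht.le).symm ▸ rfl]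
  rw [← ENNReal.ofReal_pow ht.le]

lemma sphere_image_affine {x : E3} {t : ℝ} (ht : 0 < t) :
    (fun β : E3 => x + t • β) '' Metric.sphere (0:E3) 1 = Metric.sphere x t := by
  ext y
  simp only [Set.mem_image, mem_sphere_iff_norm, sub_zero]
  constructor
  · rintro ⟨β, hβ, rfl⟩
    rw [add_sub_cancel_left, norm_smul, hβ, Real.norm_eq_abs, abs_of_pos ht, mul_one]
  · intro hy
    refine ⟨t⁻¹ • (y - x), ?_, ?_⟩
    · rw [norm_smul, hy, Real.norm_eq_abs, abs_of_pos (inv_pos.mpr ht)]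
      field_simp
    · rw [smul_smul, mul_inv_cancel₀ ht.ne', one_smul]
      abel

def affMap (x : E3) (t : ℝ) (ht : t ≠ 0) : E3 ≃ₜ E3 :=
  (Homeomorph.smulOfNeZero t ht).trans (Homeomorph.addLeft x)

lemma sphere_integral_scale (f : E3 → ℝ) (hfc : Continuous f) {x : E3} {t : ℝ} (ht : 0 < t) :
    ∫ y in Metric.sphere x t, f y ∂μH[2]
      = t^2 * ∫ β in Metric.sphere (0:E3) 1, f (x + t • β) ∂μH[2] := by
  set ψ : E3 ≃ₜ E3 := affMap x t ht.ne' with hψ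
  have hψfun : ∀ β, ψ β = x + t • β := fun β => rfl
  have hmeas : μH[2].restrict (Metric.sphere x t)
      = ENNReal.ofReal (t^2) • Measure.map ψ (μH[2].restrict (Metric.sphere (0:E3) 1)) := by
    ext s hs
    rw [Measure.restrict_apply hs, Measure.smul_apply, smul_eq_mul,
      Measure.map_apply ψ.measurable hs,
      Measure.restrict_apply (ψ.measurable hs)]
    have himg : (fun β : E3 => x + t • β) '' ((⇑ψ ⁻¹' s) ∩ Metric.sphere (0:E3) 1)
        = s ∩ Metric.sphere x t := by
      have : (fun β : E3 => x + t • β) = ⇑ψ := rfl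
      rw [this, Set.image_inter ψ.injective, Set.image_preimage_eq _ ψ.surjective,
        ← this, sphere_image_affine ht]
    calc μH[2] (s ∩ Metric.sphere x t)
        = μH[2] ((fun β : E3 => x + t • β) '' ((⇑ψ ⁻¹' s) ∩ Metric.sphere (0:E3) 1)) := by
          rw [himg]
      _ = ENNReal.ofReal (t^2) * μH[2] ((⇑ψ ⁻¹' s) ∩ Metric.sphere (0:E3) 1) :=
          hausdorff_image_affine ht _
  rw [hmeas, integral_smul_measure]
  rw [ψ.measurableEmbedding.integral_map]
  rw [ENNReal.toReal_ofReal (by positivity : (0:ℝ) ≤ t^2), smul_eq_mul]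
  congr 1

instance : IsFiniteMeasure (μH[2].restrict (Metric.sphere (0:E3) 1)) := by
  constructor
  rw [Measure.restrict_apply_univ]
  exact sphere_hausdorff_finite

def gfun (f : E3 → ℝ) (x : E3) (t : ℝ) : ℝ :=
  ∫ β in Metric.sphere (0:E3) 1, f (x + t • β) ∂μH[2]

def Dfun (f : E3 → ℝ) (x : E3) (t : ℝ) : ℝ :=
  ∫ β in Metric.sphere (0:E3) 1, (fderiv ℝ f (x + t • β)) β ∂μH[2]

section analysis

variable {f : E3 → ℝ} (hf : ContDiff ℝ (⊤:ℕ∞) f) (hsupp : HasCompactSupport f)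

set_option maxHeartbeats 1000000 in
lemma inner_hasDeriv (hf : ContDiff ℝ (⊤:ℕ∞) f) (x : E3) (β : E3) (t : ℝ) :
    HasDerivAt (fun s : ℝ => f (x + s • β)) ((fderiv ℝ f (x + t • β)) β) t := by
  have h1 : HasDerivAt (fun s : ℝ => x + s • β) β t := by
    simpa using ((hasDerivAt_id t).smul_const β).const_add x
  have h2 := ((hf.differentiable (by simp)) (x + t • β)).hasFDerivAt
  exact h2.comp_hasDerivAt t h1

lemma cont_fderiv (hf : ContDiff ℝ (⊤:ℕ∞) f) : Continuous (fderiv ℝ f) :=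
  hf.continuous_fderiv (by simp)

lemma cont_inner (hf : ContDiff ℝ (⊤:ℕ∞) f) (x : E3) (s : ℝ) :
    Continuous (fun β : E3 => f (x + s • β)) :=
  hf.continuous.comp (continuous_const.add (continuous_id.const_smul s))

lemma cont_inner' (hf : ContDiff ℝ (⊤:ℕ∞) f) (x : E3) (s : ℝ) :
    Continuous (fun β : E3 => (fderiv ℝ f (x + s • β)) β) :=
  (((cont_fderiv hf).comp (continuous_const.add (continuous_id.const_smul s))).clm_apply
    continuous_id)

set_option maxHeartbeats 1000000 in
lemma gfun_hasDeriv (hf : ContDiff ℝ (⊤:ℕ∞) f) (hsupp : HasCompactSupport f) (x : E3) (t : ℝ) :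
    HasDerivAt (gfun f x) (Dfun f x t) t := by
  obtain ⟨M₁, hM₁⟩ := (hsupp.fderiv ℝ).exists_bound_of_continuous (cont_fderiv hf)
  obtain ⟨M₀, hM₀⟩ := hsupp.exists_bound_of_continuous hf.continuous
  have key := hasDerivAt_integral_of_dominated_loc_of_deriv_le
    (μ := μH[2].restrict (Metric.sphere (0:E3) 1))
    (F := fun s β => f (x + s • β)) (F' := fun s β => (fderiv ℝ f (x + s • β)) β)
    (x₀ := t) (bound := fun _ => M₁) (s := Metric.ball t 1) (Metric.ball_mem_nhds t one_pos)
    (Eventually.of_forall fun s => (cont_inner hf x s).aestronglyMeasurable)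
    ?_ ?_ ?_ (integrable_const M₁) ?_
  · exact key.2
  · apply Integrable.mono' (integrable_const M₀)
    · exact (cont_inner hf x t).aestronglyMeasurable
    · exact Eventually.of_forall fun β => hM₀ _
  · exact (cont_inner' hf x t).aestronglyMeasurable
  · filter_upwards [ae_restrict_mem Metric.isClosed_sphere.measurableSet] with β hβ
    intro s _
    have hβ1 : ‖β‖ = 1 := by simpa using hβ
    calc ‖(fderiv ℝ f (x + s • β)) β‖ ≤ ‖fderiv ℝ f (x + s • β)‖ * ‖β‖ :=
          (fderiv ℝ f (x + s • β)).le_opNorm β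
      _ = ‖fderiv ℝ f (x + s • β)‖ := by rw [hβ1, mul_one]
      _ ≤ M₁ := hM₁ _
  · exact Eventually.of_forall fun β => fun s _ => inner_hasDeriv hf x β s

lemma gfun_cont (hf : ContDiff ℝ (⊤:ℕ∞) f) (hsupp : HasCompactSupport f) (t : ℝ) :
    Continuous (fun x => gfun f x t) := by
  obtain ⟨M₀, hM₀⟩ := hsupp.exists_bound_of_continuous hf.continuous
  apply continuous_of_dominated (bound := fun _ => M₀)
  · exact fun x => (cont_inner hf x t).aestronglyMeasurable
  · exact fun x => Eventually.of_forall fun β => hM₀ _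
  · exact integrable_const M₀
  · exact Eventually.of_forall fun β => hf.continuous.comp (continuous_id.add continuous_const)

lemma Dfun_cont (hf : ContDiff ℝ (⊤:ℕ∞) f) (hsupp : HasCompactSupport f) (t : ℝ) :
    Continuous (fun x => Dfun f x t) := by
  obtain ⟨M₁, hM₁⟩ := (hsupp.fderiv ℝ).exists_bound_of_continuous (cont_fderiv hf)
  apply continuous_of_dominated (bound := fun β => M₁ * ‖β‖)
  · exact fun x => (cont_inner' hf x t).aestronglyMeasurable
  · intro x
    apply Eventually.of_forall
    intro β
    calc ‖(fderiv ℝ f (x + t • β)) β‖ ≤ ‖fderiv ℝ f (x + t • β)‖ * ‖β‖ :=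
          (fderiv ℝ f (x + t • β)).le_opNorm β
      _ ≤ M₁ * ‖β‖ := mul_le_mul_of_nonneg_right (hM₁ _) (norm_nonneg β)
  · apply Integrable.mono' (integrable_const (|M₁| * 1))
    · exact (continuous_const.mul continuous_norm).aestronglyMeasurable
    · filter_upwards [ae_restrict_mem Metric.isClosed_sphere.measurableSet] with β hβ
      have hβ1 : ‖β‖ = 1 := by simpa using hβ
      rw [Real.norm_eq_abs, abs_mul, hβ1]
      simp [le_abs_self]
  · apply Eventually.of_forall
    intro β
    exact ((cont_fderiv hf).comp (continuous_id.add continuous_const)).clm_apply continuous_const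

def sArea : ℝ := (μH[2].restrict (Metric.sphere (0:E3) 1) Set.univ).toReal

lemma gfun_bound {M₀ : ℝ} (hM₀ : ∀ y, ‖f y‖ ≤ M₀) (x : E3) (t : ℝ) :
    ‖gfun f x t‖ ≤ M₀ * sArea :=
  norm_integral_le_of_norm_le_const (Eventually.of_forall fun β => hM₀ _)

lemma Dfun_bound (hf : ContDiff ℝ (⊤:ℕ∞) f) {M₁ : ℝ}
    (hM₁ : ∀ y, ‖fderiv ℝ f y‖ ≤ M₁) (x : E3) (t : ℝ) :
    ‖Dfun f x t‖ ≤ M₁ * sArea := by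
  apply norm_integral_le_of_norm_le_const
  filter_upwards [ae_restrict_mem Metric.isClosed_sphere.measurableSet] with β hβ
  have hβ1 : ‖β‖ = 1 := by simpa using hβ
  calc ‖(fderiv ℝ f (x + t • β)) β‖ ≤ ‖fderiv ℝ f (x + t • β)‖ * ‖β‖ :=
        (fderiv ℝ f (x + t • β)).le_opNorm β
    _ = ‖fderiv ℝ f (x + t • β)‖ := by rw [hβ1, mul_one]
    _ ≤ M₁ := hM₁ _

lemma tg_hasDeriv (hf : ContDiff ℝ (⊤:ℕ∞) f) (hsupp : HasCompactSupport f) (x : E3) (t : ℝ) :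
    HasDerivAt (fun s : ℝ => s * gfun f x s) (gfun f x t + t * Dfun f x t) t := by
  have h := (hasDerivAt_id' t).mul (gfun_hasDeriv hf hsupp x t)
  simp only [one_mul] at h
  exact h

end analysis

/-- the circular-detector data of the Kirchhoff solution equals
`(1/(8π²)) ∂ₜ(t R_P f(θ,t))`. -/
theorem stmt14 (r : ℝ) (hr : 0 < r) (f : E3 → ℝ) (hf : ContDiff ℝ (⊤:ℕ∞) f)
    (hsupp : HasCompactSupport f)
    (p : E3 → ℝ → ℝ)
    (hp : ∀ (x : E3) (t : ℝ), 0 < t →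
      p x t = deriv (fun t' => (1 / (4 * π * t')) * ∫ y in Metric.sphere x t', f y ∂μH[2]) t) :
    ∀ θ ∈ Metric.sphere (0:E3) 1, ∀ t : ℝ, 0 < t →
      (1 / (2 * π)) * (∫ α in circleSet θ, p (r • α) t ∂μH[1])
        = (1 / (8 * π^2)) * deriv (fun t' => t' * RP r f θ t') t := by
  intro θ hθ t ht
  have hθ1 : ‖θ‖ = 1 := by simpa using hθ
  haveI : IsFiniteMeasure (μH[1].restrict (circleSet θ)) := by
    constructor; rw [Measure.restrict_apply_univ]; exact circle_hausdorff_finite hθ1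
  obtain ⟨M₀, hM₀⟩ := hsupp.exists_bound_of_continuous hf.continuous
  obtain ⟨M₁, hM₁⟩ := (hsupp.fderiv ℝ).exists_bound_of_continuous (cont_fderiv hf)
  have hM₀0 : (0:ℝ) ≤ M₀ * sArea := le_trans (norm_nonneg _) (gfun_bound hM₀ 0 0)
  have hM₁0 : (0:ℝ) ≤ M₁ * sArea := le_trans (norm_nonneg _) (Dfun_bound hf hM₁ 0 0)
  have hpval : ∀ x : E3, p x t = (1/(4*π)) * (gfun f x t + t * Dfun f x t) := by
    intro x
    rw [hp x t ht]
    have heq : (fun t' => (1 / (4 * π * t')) * ∫ y in Metric.sphere x t', f y ∂μH[2])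
        =ᶠ[𝓝 t] fun t' => (1/(4*π)) * (t' * gfun f x t') := by
      filter_upwards [Ioi_mem_nhds ht] with t' ht'
      have ht'0 : (0:ℝ) < t' := ht'
      rw [sphere_integral_scale f hf.continuous ht'0]
      have h0 : (t':ℝ) ≠ 0 := ne_of_gt ht'0
      show (1 / (4 * π * t')) * (t'^2 * gfun f x t') = 1/(4*π) * (t' * gfun f x t')
      field_simp
    rw [heq.deriv_eq]
    exact ((tg_hasDeriv hf hsupp x t).const_mul (1/(4*π))).deriv
  have cont1 : ∀ s : ℝ, Continuous fun α : E3 => gfun f (r • α) s := fun s =>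
    (gfun_cont hf hsupp s).comp (continuous_const_smul r)
  have cont2 : ∀ s : ℝ, Continuous fun α : E3 => Dfun f (r • α) s := fun s =>
    (Dfun_cont hf hsupp s).comp (continuous_const_smul r)
  have key := hasDerivAt_integral_of_dominated_loc_of_deriv_le
    (μ := μH[1].restrict (circleSet θ))
    (F := fun s α => s * gfun f (r • α) s)
    (F' := fun s α => gfun f (r • α) s + s * Dfun f (r • α) s)
    (x₀ := t) (bound := fun _ => M₀ * sArea + (|t| + 1) * (M₁ * sArea)) (s := Metric.ball t 1) (Metric.ball_mem_nhds t one_pos)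
    (Eventually.of_forall fun s => (continuous_const.mul (cont1 s)).aestronglyMeasurable)
    ?_ ?_ ?_ (integrable_const _) ?_
  · have hderiv := key.2
    have hfun : (fun t' : ℝ => t' * RP r f θ t')
        = fun s : ℝ => ∫ α in circleSet θ, s * gfun f (r • α) s ∂μH[1] := by
      funext s
      rw [show RP r f θ s = ∫ α in circleSet θ, gfun f (r • α) s ∂μH[1] from rfl,
        ← integral_const_mul]
    rw [hfun]
    rw [hderiv.deriv]
    have hL : (∫ α in circleSet θ, p (r • α) t ∂μH[1])
        = (1/(4*π)) * ∫ α in circleSet θ, (gfun f (r • α) t + t * Dfun f (r • α) t) ∂μH[1] := by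
      rw [← integral_const_mul]
      exact integral_congr_ae (Eventually.of_forall fun α => hpval (r • α))
    rw [hL]
    have hπ : (π:ℝ) ≠ 0 := Real.pi_ne_zero
    have hc : (1:ℝ)/(2*π) * (1/(4*π)) = 1/(8*π^2) := by
      field_simp
      ring
    rw [← mul_assoc, hc]
  · apply Integrable.mono' (integrable_const (|t| * (M₀ * sArea)))
    · exact (continuous_const.mul (cont1 t)).aestronglyMeasurable
    · apply Eventually.of_forall
      intro α
      rw [norm_mul, Real.norm_eq_abs]
      exact mul_le_mul_of_nonneg_left (gfun_bound hM₀ _ _) (abs_nonneg t)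
  · exact ((cont1 t).add (continuous_const.mul (cont2 t))).aestronglyMeasurable
  · apply Eventually.of_forall
    intro α s hs
    have hsle : |s| ≤ |t| + 1 := by
      have := Metric.mem_ball.mp hs
      rw [Real.dist_eq] at this
      calc |s| = |t + (s - t)| := by rw [show t + (s - t) = s by ring]
        _ ≤ |t| + |s - t| := abs_add_le _ _
        _ ≤ |t| + 1 := by linarith
    calc ‖gfun f (r • α) s + s * Dfun f (r • α) s‖
        ≤ ‖gfun f (r • α) s‖ + ‖s * Dfun f (r • α) s‖ := norm_add_le _ _
      _ ≤ M₀ * sArea + (|t| + 1) * (M₁ * sArea) := by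
          apply add_le_add (gfun_bound hM₀ _ _)
          rw [norm_mul, Real.norm_eq_abs]
          exact mul_le_mul hsle (Dfun_bound hf hM₁ _ _) (norm_nonneg _)
            (by linarith [abs_nonneg t])
  · exact Eventually.of_forall fun α s _ => tg_hasDeriv hf hsupp (r • α) s
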